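/- Let G be an n×N matrix over F_q, let δ_c ≥ 0, and for each receiver i ∈ [m] let X_i ⊆ [n] be its side information set and f(i) ∉ X_i its wanted index. Define I(q,G,δ_s) = ∪_i { z ∈ F_q^n : wt(z restricted to X_i) ≤ 2δ_s and z_{f(i)} ≠ 0 }. Then G is a valid generator matrix of a (δ_s,δ_c)-generalized error-correcting index code (i.e., every receiver can decode x_{f(i)} from xG + ε with wt(ε) ≤ δ_c and side information having at most δ_s symbol errors) if and only if wt(zG) ≥ 2δ_c + 1 for all z ∈ I(q,G,δ_s). -/

import Mathlib

/-- A matrix `G` is a valid generator matrix of a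
`(δs, δc)`-generalized error-correcting index code iff
`wt(zG) ≥ 2δc + 1` for all `z ∈ I(q, G, δs)`. -/
theorem stmt0 {F : Type} [Field F] [DecidableEq F]
    {n N m : ℕ} (δs δc : ℕ)
    (X : Fin m → Finset (Fin n)) (f : Fin m → Fin n)
    (hf : ∀ i, f i ∉ X i)
    (G : Matrix (Fin n) (Fin N) F) :
    (∀ i : Fin m, ∀ x x' : Fin n → F,
        x (f i) ≠ x' (f i) →
        ((X i).filter (fun j => x j ≠ x' j)).card ≤ 2 * δs →
        ∀ e e' : Fin N → F, hammingNorm e ≤ δc → hammingNorm e' ≤ δc →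
          Matrix.vecMul x G + e ≠ Matrix.vecMul x' G + e') ↔
      (∀ z : Fin n → F,
        (∃ i : Fin m, z (f i) ≠ 0 ∧
          ((X i).filter (fun j => z j ≠ 0)).card ≤ 2 * δs) →
        2 * δc + 1 ≤ hammingNorm (Matrix.vecMul z G)) := by
  constructor
  · -- forward
    intro h z ⟨i, hzf, hzcard⟩
    by_contra hlt
    push_neg at hlt
    have hw : hammingNorm (Matrix.vecMul z G) ≤ 2 * δc := by omega
    set w := Matrix.vecMul z G with hwdef
    set S : Finset (Fin N) := Finset.univ.filter (fun j => w j ≠ 0) with hS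
    have hScard : S.card ≤ 2 * δc := hw
    obtain ⟨T, hTS, hTcard⟩ := Finset.exists_subset_card_eq (s := S) (n := min S.card δc)
      (min_le_left _ _)
    have hT1 : T.card ≤ δc := hTcard ▸ min_le_right _ _
    have hT2 : (S \ T).card ≤ δc := by
      rw [Finset.card_sdiff_of_subset hTS, hTcard]
      omega
    set e : Fin N → F := fun j => if j ∈ T then 0 else -(w j) with he
    set e' : Fin N → F := fun j => if j ∈ T then w j else 0 with he'
    have hew : hammingNorm e ≤ δc := by
      refine le_trans ?_ hT2
      apply Finset.card_le_card
      intro j hj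
      simp only [hammingNorm, Finset.mem_filter, Finset.mem_univ, true_and, he] at hj
      rw [Finset.mem_sdiff]
      by_cases hjT : j ∈ T
      · simp [hjT] at hj
      · refine ⟨?_, hjT⟩
        simp only [hjT, if_false, ne_eq, neg_eq_zero] at hj
        simp [hS, hj]
    have hew' : hammingNorm e' ≤ δc := by
      refine le_trans ?_ hT1
      apply Finset.card_le_card
      intro j hj
      simp only [hammingNorm, Finset.mem_filter, Finset.mem_univ, true_and, he'] at hj
      by_cases hjT : j ∈ T
      · exact hjT
      · simp [hjT] at hj
    have key := h i z 0 (by simpa using hzf)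
      (by simpa using hzcard) e e' hew hew'
    apply key
    rw [Matrix.zero_vecMul]
    funext j
    by_cases hjT : j ∈ T <;> simp [he, he', hjT, hwdef]
  · -- backward
    intro h i x x' hxf hcard e e' hee hee' heq
    have hz : Matrix.vecMul (x - x') G = e' - e := by
      rw [Matrix.sub_vecMul]
      have : Matrix.vecMul x G - Matrix.vecMul x' G = e' - e := by
        have := heq
        abel_nf at this ⊢
        linear_combination (norm := abel) this
      exact this
    have h1 : 2 * δc + 1 ≤ hammingNorm (Matrix.vecMul (x - x') G) := by
      apply h
      refine ⟨i, by simpa [sub_ne_zero] using hxf, ?_⟩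
      simpa [sub_ne_zero] using hcard
    rw [hz, sub_eq_neg_add, ← hammingDist_eq_hammingNorm, hammingDist_comm] at h1
    have h2 : hammingDist e' e ≤ hammingNorm e' + hammingNorm e := by
      calc hammingDist e' e ≤ hammingDist e' 0 + hammingDist 0 e := hammingDist_triangle _ _ _
        _ = hammingNorm e' + hammingNorm e := by
            rw [hammingDist_zero_right, hammingDist_zero_left]
    omega
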